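/- Let U ⊆ ℝ² be open and connected, let x : U → ℝ³ be twice continuously differentiable with continuous functions λ, μ : U → ℝ satisfying x_{uv} = λ x_u + μ x_v on U, and suppose B_M(x_u, x_v) = 0 on U. If the function G := B_M(x_v, x_v) vanishes at some point (u₀, v₀) ∈ U, then G(u, v₀) = 0 for every u with (u, v₀) in U lying in the same horizontal segment of U through (u₀, v₀); that is, the induced metric degenerates along the whole parameter curve v = v₀ through that point. (Paper: Lemma 2.2.) -/

import Mathlib

/-- The Minkowski bilinear form on `ℝ³ = ℝ × ℝ × ℝ`. -/
def BM (x y : ℝ × ℝ × ℝ) : ℝ := x.1 * y.1 + x.2.1 * y.2.1 - x.2.2 * y.2.2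

/-- Partial derivative in the `u`-direction. -/
noncomputable def pdu (x : ℝ × ℝ → ℝ × ℝ × ℝ) (p : ℝ × ℝ) : ℝ × ℝ × ℝ :=
  fderiv ℝ x p (1, 0)

/-- Partial derivative in the `v`-direction. -/
noncomputable def pdv (x : ℝ × ℝ → ℝ × ℝ × ℝ) (p : ℝ × ℝ) : ℝ × ℝ × ℝ :=
  fderiv ℝ x p (0, 1)

/-- Mixed second partial derivative `x_{uv}`. -/
noncomputable def pduv (x : ℝ × ℝ → ℝ × ℝ × ℝ) (p : ℝ × ℝ) : ℝ × ℝ × ℝ :=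
  fderiv ℝ (fun q => fderiv ℝ x q (1, 0)) p (0, 1)

lemma key_deriv
    (U : Set (ℝ × ℝ)) (hUopen : IsOpen U)
    (x : ℝ × ℝ → ℝ × ℝ × ℝ) (hx : ContDiffOn ℝ 2 x U)
    (lam mu : ℝ × ℝ → ℝ)
    (hconj : ∀ p ∈ U, pduv x p = lam p • pdu x p + mu p • pdv x p)
    (horth : ∀ p ∈ U, BM (pdu x p) (pdv x p) = 0)
    (G : ℝ × ℝ → ℝ) (hG : ∀ p, G p = BM (pdv x p) (pdv x p))
    (p : ℝ × ℝ) (hp : p ∈ U) :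
    HasDerivAt (fun t => G (t, p.2)) (2 * mu p * G p) p.1 := by
  set F : ℝ × ℝ → (ℝ × ℝ) →L[ℝ] ℝ × ℝ × ℝ := fderiv ℝ x with hF
  have hF1 : ContDiffOn ℝ 1 F U := hx.fderiv_of_isOpen hUopen (by norm_num)
  have hFd : HasFDerivAt F (fderiv ℝ F p) p :=
    (((hF1.differentiableOn one_ne_zero) p hp).differentiableAt (hUopen.mem_nhds hp)).hasFDerivAt
  set F₂ := fderiv ℝ F p with hF₂
  -- symmetry of second derivative
  have hsymm : ∀ v w, F₂ v w = F₂ w v := by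
    apply second_derivative_symmetric_of_eventually (f := x) _ hFd
    filter_upwards [hUopen.mem_nhds hp] with q hq
    exact (((hx.differentiableOn (by norm_num)) q hq).differentiableAt
      (hUopen.mem_nhds hq)).hasFDerivAt
  -- the curve
  have hc : HasDerivAt (fun t : ℝ => ((t, p.2) : ℝ × ℝ)) ((1:ℝ), (0:ℝ)) p.1 := by
    have := ((hasDerivAt_id p.1).prodMk (hasDerivAt_const p.1 p.2))
    simpa using this
  have hFc : HasDerivAt (fun t => F (t, p.2)) (F₂ (1, 0)) p.1 := by
    have := hFd.comp_hasDerivAt p.1 hc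
    simpa [Function.comp_def] using this
  have h2 : HasDerivAt (fun t => F (t, p.2) (0, 1)) (F₂ (1, 0) (0, 1)) p.1 := by
    have := hFc.clm_apply (hasDerivAt_const p.1 ((0:ℝ), (1:ℝ)))
    simpa using this
  -- identify F₂ (1,0) (0,1) with pduv
  have hpduv : pduv x p = F₂ (1, 0) (0, 1) := by
    have happ : HasFDerivAt (fun q => F q ((1:ℝ), (0:ℝ)))
        ((ContinuousLinearMap.apply ℝ (ℝ × ℝ × ℝ) ((1:ℝ), (0:ℝ))).comp F₂) p :=
      (ContinuousLinearMap.apply ℝ (ℝ × ℝ × ℝ) ((1:ℝ), (0:ℝ))).hasFDerivAt.comp p hFd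
    have : pduv x p = ((ContinuousLinearMap.apply ℝ (ℝ × ℝ × ℝ) ((1:ℝ), (0:ℝ))).comp F₂) (0, 1) := by
      rw [pduv, happ.fderiv]
    rw [this]
    simp [hsymm]
  -- component derivatives
  have e1 : HasDerivAt (fun t => (F (t, p.2) ((0:ℝ), (1:ℝ))).1) (F₂ (1, 0) (0, 1)).1 p.1 := by
    have := (ContinuousLinearMap.fst ℝ ℝ (ℝ × ℝ)).hasFDerivAt.comp_hasDerivAt p.1 h2
    simpa [Function.comp_def] using this
  have e2 : HasDerivAt (fun t => (F (t, p.2) ((0:ℝ), (1:ℝ))).2.1) (F₂ (1, 0) (0, 1)).2.1 p.1 := by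
    have := ((ContinuousLinearMap.fst ℝ ℝ ℝ).comp
      (ContinuousLinearMap.snd ℝ ℝ (ℝ × ℝ))).hasFDerivAt.comp_hasDerivAt p.1 h2
    simpa [Function.comp_def] using this
  have e3 : HasDerivAt (fun t => (F (t, p.2) ((0:ℝ), (1:ℝ))).2.2) (F₂ (1, 0) (0, 1)).2.2 p.1 := by
    have := ((ContinuousLinearMap.snd ℝ ℝ ℝ).comp
      (ContinuousLinearMap.snd ℝ ℝ (ℝ × ℝ))).hasFDerivAt.comp_hasDerivAt p.1 h2
    simpa [Function.comp_def] using this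
  have hBM := ((e1.mul e1).add (e2.mul e2)).sub (e3.mul e3)
  -- the value of the derivative
  have hb : BM (pduv x p) (pdv x p) = mu p * G p := by
    rw [hconj p hp, hG p]
    have h0 := horth p hp
    simp only [BM, Prod.fst_add, Prod.snd_add, Prod.smul_fst, Prod.smul_snd,
      smul_eq_mul] at h0 ⊢
    ring_nf
    ring_nf at h0
    linear_combination lam p * h0
  have hfun : (fun t => G (t, p.2)) = fun t =>
      (F (t, p.2) ((0:ℝ), (1:ℝ))).1 * (F (t, p.2) ((0:ℝ), (1:ℝ))).1 +
      (F (t, p.2) ((0:ℝ), (1:ℝ))).2.1 * (F (t, p.2) ((0:ℝ), (1:ℝ))).2.1 -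
      (F (t, p.2) ((0:ℝ), (1:ℝ))).2.2 * (F (t, p.2) ((0:ℝ), (1:ℝ))).2.2 := by
    funext t
    rw [hG]
    simp [BM, pdv, hF]
  have hvaleq : 2 * mu p * G p =
      (F₂ (1, 0) (0, 1)).1 * (F (p.1, p.2) ((0:ℝ), (1:ℝ))).1 +
        (F (p.1, p.2) ((0:ℝ), (1:ℝ))).1 * (F₂ (1, 0) (0, 1)).1 +
      ((F₂ (1, 0) (0, 1)).2.1 * (F (p.1, p.2) ((0:ℝ), (1:ℝ))).2.1 +
        (F (p.1, p.2) ((0:ℝ), (1:ℝ))).2.1 * (F₂ (1, 0) (0, 1)).2.1) -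
      ((F₂ (1, 0) (0, 1)).2.2 * (F (p.1, p.2) ((0:ℝ), (1:ℝ))).2.2 +
        (F (p.1, p.2) ((0:ℝ), (1:ℝ))).2.2 * (F₂ (1, 0) (0, 1)).2.2) := by
    rw [← hpduv] at *
    have : (F (p.1, p.2) ((0:ℝ), (1:ℝ))) = pdv x p := by
      simp [pdv, hF]
    rw [this]
    simp only [BM] at hb
    linear_combination (-2) * hb
  rw [hfun, show (2 * mu p * G p) = _ from hvaleq]
  exact hBM

/-- **Lemma 2.2.** For an orthogonal conjugate parametrization `x` of a surface patch in
Minkowski space, if the metric coefficient `G = B_M(x_v, x_v)` vanishes at a point, then it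
vanishes along the whole horizontal parameter curve `v = v₀` through that point (as far as the
horizontal segment stays inside `U`). -/
theorem degenerate_along_parameter_curve
    (U : Set (ℝ × ℝ)) (hUopen : IsOpen U) (hUconn : IsConnected U)
    (x : ℝ × ℝ → ℝ × ℝ × ℝ) (hx : ContDiffOn ℝ 2 x U)
    (lam mu : ℝ × ℝ → ℝ) (hlam : ContinuousOn lam U) (hmu : ContinuousOn mu U)
    (hconj : ∀ p ∈ U, pduv x p = lam p • pdu x p + mu p • pdv x p)
    (horth : ∀ p ∈ U, BM (pdu x p) (pdv x p) = 0)
    (G : ℝ × ℝ → ℝ) (hG : ∀ p, G p = BM (pdv x p) (pdv x p))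
    (u₀ v₀ : ℝ) (h₀ : (u₀, v₀) ∈ U) (hG₀ : G (u₀, v₀) = 0) :
    ∀ u : ℝ, (∀ t ∈ Set.uIcc u₀ u, (t, v₀) ∈ U) → G (u, v₀) = 0 := by
  intro u hseg
  set g : ℝ → ℝ := fun t => G (t, v₀) with hgdef
  have hder : ∀ t, (t, v₀) ∈ U → HasDerivAt g (2 * mu (t, v₀) * g t) t := fun t ht =>
    key_deriv U hUopen x hx lam mu hconj horth G hG (t, v₀) ht
  set a := min u₀ u with ha
  set b := max u₀ u with hb
  have huicc : Set.uIcc u₀ u = Set.Icc a b := rfl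
  have hmem : ∀ t ∈ Set.Icc a b, (t, v₀) ∈ U := fun t ht => hseg t (huicc ▸ ht)
  have hcurve : ContinuousOn (fun t : ℝ => ((t, v₀) : ℝ × ℝ)) (Set.Icc a b) :=
    (continuous_id.prodMk continuous_const).continuousOn
  have hcont_c : ContinuousOn (fun t => 2 * mu (t, v₀)) (Set.Icc a b) :=
    continuousOn_const.mul (hmu.comp hcurve hmem)
  obtain ⟨C, hC⟩ := isCompact_Icc.exists_bound_of_continuousOn hcont_c
  set M := max C 0 with hM
  set K : NNReal := ⟨M, le_max_right _ _⟩ with hK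
  set w : ℝ → ℝ → ℝ := fun t y => max (-M) (min (2 * mu (t, v₀)) M) * y with hw
  have hlip : ∀ t, LipschitzWith K (w t) := by
    intro t
    apply LipschitzWith.of_dist_le_mul
    intro y z
    have hMnn : (0:ℝ) ≤ M := le_max_right _ _
    have habs : |max (-M) (min (2 * mu (t, v₀)) M)| ≤ M :=
      abs_le.mpr ⟨le_max_left _ _, max_le (by linarith) (min_le_right _ _)⟩
    simp only [hw, Real.dist_eq]
    rw [← mul_sub, abs_mul]
    exact mul_le_mul_of_nonneg_right habs (abs_nonneg _)
  have hveq : ∀ t ∈ Set.Icc a b, w t (g t) = 2 * mu (t, v₀) * g t := by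
    intro t ht
    have h1 := hC t ht
    rw [Real.norm_eq_abs, abs_le] at h1
    have heq : max (-M) (min (2 * mu (t, v₀)) M) = 2 * mu (t, v₀) := by
      rw [min_eq_left (le_trans h1.2 (le_max_left _ _)), max_eq_right]
      have h3 : -M ≤ -C := neg_le_neg (le_max_left C 0)
      linarith [h1.1]
    show max (-M) (min (2 * mu (t, v₀)) M) * g t = 2 * mu (t, v₀) * g t
    rw [heq]
  have hgderiv : ∀ t ∈ Set.Icc a b, HasDerivAt g (w t (g t)) t := by
    intro t ht
    rw [hveq t ht]
    exact hder t (hmem t ht)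
  have hgcont : ContinuousOn g (Set.Icc a b) := fun t ht =>
    (hgderiv t ht).continuousAt.continuousWithinAt
  have hzderiv : ∀ (t : ℝ) (s : Set ℝ), HasDerivWithinAt (fun _ : ℝ => (0:ℝ)) (w t 0) s t := by
    intro t s
    have : w t 0 = 0 := mul_zero _
    rw [this]
    exact hasDerivWithinAt_const t s 0
  have hzero : Set.EqOn g (fun _ => (0:ℝ)) (Set.Icc a b) := by
    rcases le_total u₀ u with h | h
    · have hau : a = u₀ := min_eq_left h
      have hbu : b = u := max_eq_right h
      apply ODE_solution_unique hlip hgcont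
        (fun t ht => (hgderiv t (Set.Ico_subset_Icc_self ht)).hasDerivWithinAt)
        continuousOn_const (fun t ht => hzderiv t _)
      rw [hau]; exact hG₀
    · have hau : a = u := min_eq_right h
      have hbu : b = u₀ := max_eq_left h
      apply ODE_solution_unique_of_mem_Icc_left (s := fun _ => Set.univ)
        (fun t _ => (hlip t).lipschitzOnWith) hgcont
        (fun t ht => (hgderiv t (Set.Ioc_subset_Icc_self ht)).hasDerivWithinAt)
        (fun _ _ => Set.mem_univ _)
        continuousOn_const (fun t ht => hzderiv t _) (fun _ _ => Set.mem_univ _)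
      rw [hbu]; exact hG₀
  have := hzero (Set.mem_Icc.mpr ⟨min_le_right u₀ u, le_max_right u₀ u⟩)
  simpa using this
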